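/- Identity lemma for indexed MALL: for every MALL(I) formula A of domain J, the sequent ⊢_J A, A^⊥ is provable in MALL(I) (the sequent calculus with indexed axioms ⊢_J 1_J and ⊢_∅ Γ, ⊤_∅, and the indexed multiplicative and additive rules), by induction on A. -/

import Mathlib

namespace IndexedMALL

variable {I : Type*}

/-- Formulas of Bucciarelli–Ehrhard indexed multiplicative–additive linear
logic `MALL(I)`, built from indexed constants by the binary connectives. -/
inductive Formula (I : Type*) where
  | one (J : Set I)
  | bot (J : Set I)
  | zero
  | top
  | tensor (A B : Formula I)
  | par (A B : Formula I)
  | oplus (A B : Formula I)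
  | with_ (A B : Formula I)

/-- The domain `d(A) ⊆ I` of a `MALL(I)` formula. -/
def dom : Formula I → Set I
  | .one J => J
  | .bot J => J
  | .zero => ∅
  | .top => ∅
  | .tensor A B => dom A
  | .par A B => dom A
  | .oplus A B => dom A ∪ dom B
  | .with_ A B => dom A ∪ dom B

/-- Well-formedness: multiplicative connectives join formulas of the same
domain, additive connectives join formulas of disjoint domains. -/
def WF : Formula I → Prop
  | .one _ => True
  | .bot _ => True
  | .zero => True
  | .top => True
  | .tensor A B => WF A ∧ WF B ∧ dom A = dom B
  | .par A B => WF A ∧ WF B ∧ dom A = dom B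
  | .oplus A B => WF A ∧ WF B ∧ Disjoint (dom A) (dom B)
  | .with_ A B => WF A ∧ WF B ∧ Disjoint (dom A) (dom B)

/-- Linear negation by De Morgan duality, preserving domains. -/
def neg : Formula I → Formula I
  | .one J => .bot J
  | .bot J => .one J
  | .zero => .top
  | .top => .zero
  | .tensor A B => .par (neg A) (neg B)
  | .par A B => .tensor (neg A) (neg B)
  | .oplus A B => .with_ (neg A) (neg B)
  | .with_ A B => .oplus (neg A) (neg B)

/-- Restriction `A|_K` of a `MALL(I)` formula by a set of indices `K`. -/
def restrict : Formula I → Set I → Formula I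
  | .one J, K => .one (J ∩ K)
  | .bot J, K => .bot (J ∩ K)
  | .zero, _ => .zero
  | .top, _ => .top
  | .tensor A B, K => .tensor (restrict A K) (restrict B K)
  | .par A B, K => .par (restrict A K) (restrict B K)
  | .oplus A B, K => .oplus (restrict A K) (restrict B K)
  | .with_ A B, K => .with_ (restrict A K) (restrict B K)

end IndexedMALL

namespace IndexedMALL

/-- Provability of `MALL(I)` sequents `⊢_J Γ`. -/
inductive Prov {I : Type*} : Set I → List (Formula I) → Prop
  | one (J : Set I) : Prov J [.one J]
  | top (Γ : List (Formula I)) : Prov ∅ (Γ ++ [.top])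
  | bot {J Γ} : Prov J Γ → Prov J (Γ ++ [.bot J])
  | tensor {J : Set I} {Γ₁ Γ₂ A B} :
      Prov J (Γ₁ ++ [A]) → Prov J (Γ₂ ++ [B]) →
      Prov J (Γ₁ ++ Γ₂ ++ [.tensor A B])
  | par {J : Set I} {Γ A B} :
      Prov J (Γ ++ [A, B]) → Prov J (Γ ++ [.par A B])
  | with_ {J₁ J₂ : Set I} {Γ A₁ A₂} (h : Disjoint J₁ J₂)
      (hA₁ : dom A₁ = J₁) (hA₂ : dom A₂ = J₂) :
      Prov J₁ (Γ.map (fun A => restrict A J₁) ++ [A₁]) →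
      Prov J₂ (Γ.map (fun A => restrict A J₂) ++ [A₂]) →
      Prov (J₁ ∪ J₂) (Γ ++ [.with_ A₁ A₂])
  | oplus₁ {J : Set I} {Γ A₁ A₂} (h : dom A₂ = ∅) :
      Prov J (Γ ++ [A₁]) → Prov J (Γ ++ [.oplus A₁ A₂])
  | oplus₂ {J : Set I} {Γ A₁ A₂} (h : dom A₁ = ∅) :
      Prov J (Γ ++ [A₂]) → Prov J (Γ ++ [.oplus A₁ A₂])
  | exch {J : Set I} {Γ Γ'} : Γ.Perm Γ' → Prov J Γ → Prov J Γ'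

end IndexedMALL

open IndexedMALL

namespace IndexedMALL

theorem dom_neg (A : Formula I) : dom (neg A) = dom A := by
  induction A <;> simp [neg, dom, *]

theorem wf_neg (A : Formula I) (h : WF A) : WF (neg A) := by
  induction A <;> simp_all [neg, WF, dom_neg]

theorem dom_restrict (A : Formula I) (K : Set I) :
    dom (restrict A K) = dom A ∩ K := by
  induction A <;> simp [restrict, dom, Set.union_inter_distrib_right, *]

theorem restrict_eq_self (A : Formula I) (K : Set I) (h : WF A)
    (hK : dom A ⊆ K) : restrict A K = A := by
  induction A with
  | one J => rw [restrict, Set.inter_eq_left.mpr (show J ⊆ K from hK)]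
  | bot J => rw [restrict, Set.inter_eq_left.mpr (show J ⊆ K from hK)]
  | zero => rfl
  | top => rfl
  | tensor A B ihA ihB =>
      obtain ⟨hA, hB, hAB⟩ := h
      have hB' : dom B ⊆ K := hAB ▸ hK
      simp [restrict, ihA hA hK, ihB hB hB']
  | par A B ihA ihB =>
      obtain ⟨hA, hB, hAB⟩ := h
      have hB' : dom B ⊆ K := hAB ▸ hK
      simp [restrict, ihA hA hK, ihB hB hB']
  | oplus A B ihA ihB =>
      obtain ⟨hA, hB, _⟩ := h
      have h1 : dom A ⊆ K := le_trans le_sup_left hK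
      have h2 : dom B ⊆ K := le_trans le_sup_right hK
      simp [restrict, ihA hA h1, ihB hB h2]
  | with_ A B ihA ihB =>
      obtain ⟨hA, hB, _⟩ := h
      have h1 : dom A ⊆ K := le_trans le_sup_left hK
      have h2 : dom B ⊆ K := le_trans le_sup_right hK
      simp [restrict, ihA hA h1, ihB hB h2]

theorem perm_pair (a b : Formula I) : [a, b].Perm [b, a] :=
  List.Perm.swap b a []

theorem perm_rot (a b c : Formula I) : [a, b, c].Perm [c, a, b] :=
  ((List.Perm.swap a c [b]).trans ((List.Perm.swap b c []).cons a)).symm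

theorem ident (A : Formula I) (hA : WF A) : Prov (dom A) [A, neg A] := by
  induction A with
  | one J =>
      have h := Prov.bot (Prov.one J)
      simpa [neg, dom] using h
  | bot J =>
      have h := Prov.bot (Prov.one J)
      exact Prov.exch (perm_pair _ _) (by simpa [neg, dom] using h)
  | zero =>
      have h := Prov.top (I := I) [.zero]
      simpa [neg, dom] using h
  | top =>
      have h := Prov.top (I := I) [.zero]
      exact Prov.exch (perm_pair _ _) (by simpa [neg, dom] using h)
  | tensor A B ihA ihB =>
      obtain ⟨hA, hB, hAB⟩ := hA
      have h1 : Prov (dom A) ([neg A] ++ [A]) :=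
        Prov.exch (perm_pair _ _) (ihA hA)
      have h2 : Prov (dom A) ([neg B] ++ [B]) := by
        rw [hAB]; exact Prov.exch (perm_pair _ _) (ihB hB)
      have h3 := Prov.tensor h1 h2
      have h4 : Prov (dom A) ([Formula.tensor A B] ++ [neg A, neg B]) :=
        Prov.exch (perm_rot _ _ _) (by simpa using h3)
      have h5 := Prov.par h4
      simpa [neg, dom] using h5
  | par A B ihA ihB =>
      obtain ⟨hA, hB, hAB⟩ := hA
      have h1 : Prov (dom A) ([A] ++ [neg A]) := ihA hA
      have h2 : Prov (dom A) ([B] ++ [neg B]) := by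
        rw [hAB]; exact ihB hB
      have h3 := Prov.tensor h1 h2
      have h4 : Prov (dom A) ([Formula.tensor (neg A) (neg B)] ++ [A, B]) :=
        Prov.exch (perm_rot _ _ _) (by simpa using h3)
      have h5 := Prov.par h4
      exact Prov.exch (perm_pair _ _) (by simpa [neg, dom] using h5)
  | oplus A B ihA ihB =>
      obtain ⟨hA, hB, hd⟩ := hA
      have e1 : restrict A (dom A) = A := restrict_eq_self A _ hA le_rfl
      have e2 : restrict B (dom B) = B := restrict_eq_self B _ hB le_rfl
      have dBA : dom (restrict B (dom A)) = ∅ := by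
        rw [dom_restrict]
        exact Set.disjoint_iff_inter_eq_empty.mp hd.symm
      have dAB : dom (restrict A (dom B)) = ∅ := by
        rw [dom_restrict]
        exact Set.disjoint_iff_inter_eq_empty.mp hd
      have p1 : Prov (dom A)
          ([Formula.oplus (restrict A (dom A)) (restrict B (dom A))] ++ [neg A]) := by
        refine Prov.exch (perm_pair _ _) ?_
        have : Prov (dom A) ([neg A] ++ [Formula.oplus
            (restrict A (dom A)) (restrict B (dom A))]) := by
          refine Prov.oplus₁ dBA ?_
          rw [e1]
          exact Prov.exch (perm_pair _ _) (ihA hA)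
        simpa using this
      have p2 : Prov (dom B)
          ([Formula.oplus (restrict A (dom B)) (restrict B (dom B))] ++ [neg B]) := by
        refine Prov.exch (perm_pair _ _) ?_
        have : Prov (dom B) ([neg B] ++ [Formula.oplus
            (restrict A (dom B)) (restrict B (dom B))]) := by
          refine Prov.oplus₂ dAB ?_
          rw [e2]
          exact Prov.exch (perm_pair _ _) (ihB hB)
        simpa using this
      have h := Prov.with_ (Γ := [Formula.oplus A B]) hd (dom_neg A) (dom_neg B)
        (by simpa [restrict] using p1) (by simpa [restrict] using p2)
      simpa [neg, dom] using h
  | with_ A B ihA ihB =>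
      obtain ⟨hA, hB, hd⟩ := hA
      have e1 : restrict (neg A) (dom A) = neg A :=
        restrict_eq_self _ _ (wf_neg A hA) (by rw [dom_neg])
      have e2 : restrict (neg B) (dom B) = neg B :=
        restrict_eq_self _ _ (wf_neg B hB) (by rw [dom_neg])
      have dBA : dom (restrict (neg B) (dom A)) = ∅ := by
        rw [dom_restrict, dom_neg]
        exact Set.disjoint_iff_inter_eq_empty.mp hd.symm
      have dAB : dom (restrict (neg A) (dom B)) = ∅ := by
        rw [dom_restrict, dom_neg]
        exact Set.disjoint_iff_inter_eq_empty.mp hd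
      have p1 : Prov (dom A)
          ([Formula.oplus (restrict (neg A) (dom A)) (restrict (neg B) (dom A))]
            ++ [A]) := by
        refine Prov.exch (perm_pair _ _) ?_
        have : Prov (dom A) ([A] ++ [Formula.oplus
            (restrict (neg A) (dom A)) (restrict (neg B) (dom A))]) := by
          refine Prov.oplus₁ dBA ?_
          rw [e1]
          exact ihA hA
        simpa using this
      have p2 : Prov (dom B)
          ([Formula.oplus (restrict (neg A) (dom B)) (restrict (neg B) (dom B))]
            ++ [B]) := by
        refine Prov.exch (perm_pair _ _) ?_
        have : Prov (dom B) ([B] ++ [Formula.oplus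
            (restrict (neg A) (dom B)) (restrict (neg B) (dom B))]) := by
          refine Prov.oplus₂ dAB ?_
          rw [e2]
          exact ihB hB
        simpa using this
      have h := Prov.with_ (Γ := [Formula.oplus (neg A) (neg B)]) hd rfl rfl
        (by simpa [restrict] using p1) (by simpa [restrict] using p2)
      exact Prov.exch (perm_pair _ _) (by simpa [neg, dom] using h)

end IndexedMALL

theorem identity_lemma {I : Type*} (A : Formula I) (J : Set I)
    (hA : WF A) (hdom : dom A = J) :
    Prov J [A, neg A] := by
  subst hdom
  exact IndexedMALL.ident A hA
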